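/- (Prokhorov–Szynal lemma, region D₁) Let ω(z) = c₁z + c₂z² + c₃z³ + ⋯ be a Schwarz function on the unit disk D, and let μ, ν be real numbers with |μ| ≤ 1/2 and −1 ≤ ν ≤ 1. Then |c₃ + μ c₁c₂ + ν c₁³| ≤ 1. -/

import Mathlib

open Complex Metric
open scoped NNReal ENNReal

lemma mobius_norm_le {a w : ℂ} (ha : ‖a‖ ≤ 1) (hw : ‖w‖ ≤ 1) :
    ‖w - a‖ ≤ ‖1 - (starRingEnd ℂ) a * w‖ := by
  have hna : Complex.normSq a ≤ 1 := by
    rw [Complex.normSq_eq_norm_sq]; nlinarith [norm_nonneg a, ha]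
  have hnw : Complex.normSq w ≤ 1 := by
    rw [Complex.normSq_eq_norm_sq]; nlinarith [norm_nonneg w, hw]
  have h : Complex.normSq (1 - (starRingEnd ℂ) a * w) - Complex.normSq (w - a)
      = (1 - Complex.normSq a) * (1 - Complex.normSq w) := by
    simp only [Complex.normSq_apply, Complex.sub_re, Complex.sub_im, Complex.mul_re,
      Complex.mul_im, Complex.conj_re, Complex.conj_im, Complex.one_re, Complex.one_im]
    ring
  have h2 : Complex.normSq (w - a) ≤ Complex.normSq (1 - (starRingEnd ℂ) a * w) := by
    nlinarith [Complex.normSq_nonneg (w-a)]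
  rw [Complex.norm_def, Complex.norm_def]
  exact Real.sqrt_le_sqrt h2

lemma schwarz_closed {f : ℂ → ℂ} (hd : DifferentiableOn ℂ f (ball (0:ℂ) 1))
    (h0 : f 0 = 0) (hb : ∀ z ∈ ball (0:ℂ) 1, ‖f z‖ ≤ 1) :
    ∀ z ∈ ball (0:ℂ) 1, ‖dslope f 0 z‖ ≤ 1 := by
  intro z hz
  rw [mem_ball_zero_iff] at hz
  by_contra hlt
  push_neg at hlt
  set A := ‖dslope f 0 z‖ with hA
  have hA1 : 1 < A := hlt
  have hA0 : 0 < A := lt_trans one_pos hA1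
  have hAi : 0 < A⁻¹ := inv_pos.2 hA0
  have hAc : A⁻¹ * A = 1 := inv_mul_cancel₀ (ne_of_gt hA0)
  have hmax : max ‖z‖ A⁻¹ < 1 := max_lt hz (by nlinarith)
  obtain ⟨r, hr1, hr2⟩ := exists_between hmax
  have hrz : ‖z‖ < r := (le_max_left _ _).trans_lt hr1
  have hrA : A⁻¹ < r := (le_max_right _ _).trans_lt hr1
  have hr0 : 0 < r := (norm_nonneg z).trans_lt hrz
  have hAr : 1 < A * r := by nlinarith
  set ε : ℝ := (A * r - 1) / 2 with hε
  have hε0 : 0 < ε := by rw [hε]; linarith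
  have key : A ≤ (1 + ε) / r := by
    apply Complex.norm_dslope_le_div_of_mapsTo_ball (c := 0) (R₁ := r) (R₂ := 1 + ε)
    · exact hd.mono (ball_subset_ball (le_of_lt hr2))
    · intro w hw
      rw [mem_ball_zero_iff] at hw
      rw [h0, mem_closedBall_zero_iff]
      exact le_trans (hb w (mem_ball_zero_iff.2 (hw.trans hr2))) (by linarith)
    · exact mem_ball_zero_iff.2 hrz
  have hcontr : (1 + ε) / r < A := by
    rw [div_lt_iff₀ hr0]
    rw [hε]; linarith
  linarith

lemma schur_param
    (ω : ℂ → ℂ) (c : ℕ → ℂ)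
    (hω : DifferentiableOn ℂ ω (ball (0 : ℂ) 1))
    (hωc : ∀ z ∈ ball (0 : ℂ) 1, HasSum (fun n => c n * z ^ n) (ω z))
    (hc0 : c 0 = 0)
    (hωmap : ∀ z ∈ ball (0 : ℂ) 1, ω z ∈ ball (0 : ℂ) 1) :
    ∃ a b d : ℂ, ‖a‖ ≤ 1 ∧ ‖b‖ ≤ 1 ∧ ‖d‖ ≤ 1 ∧ c 1 = a ∧
      c 2 = (1 - (starRingEnd ℂ) a * a) * b ∧
      c 3 = (1 - (starRingEnd ℂ) a * a) * ((1 - (starRingEnd ℂ) b * b) * d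
        - (starRingEnd ℂ) a * b ^ 2) := by
  have h0mem : (0:ℂ) ∈ ball (0:ℂ) 1 := mem_ball_self one_pos
  have hω0 : ω 0 = 0 := by
    have h1 := hωc 0 h0mem
    have h2 : HasSum (fun n => c n * (0:ℂ) ^ n) (c 0) := by
      convert hasSum_single (f := fun n => c n * (0:ℂ)^n) 0 (fun b hb => ?_) using 1
      · simp
      · simp [zero_pow hb]
    rw [h1.unique h2, hc0]
  set P : FormalMultilinearSeries ℂ ℂ ℂ := FormalMultilinearSeries.ofScalars ℂ c with hPdef
  have hPc : ∀ n, P.coeff n = c n := by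
    intro n
    show (FormalMultilinearSeries.ofScalars ℂ c n) (fun _ => 1) = c n
    rw [FormalMultilinearSeries.ofScalars_apply_eq]
    simp
  have hrad : ((3/4 : ℝ≥0) : ℝ≥0∞) ≤ P.radius := by
    apply P.le_radius_of_tendsto (l := 0)
    have hs := (hωc ((3:ℂ)/4) (by rw [mem_ball_zero_iff]; norm_num [norm_div])).summable
    have ht := hs.tendsto_atTop_zero
    have := ht.norm
    simp only [norm_zero] at this
    convert this using 2 with n
    rw [FormalMultilinearSeries.ofScalars_norm, norm_mul, norm_pow]
    norm_num [norm_div]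
  have hP : HasFPowerSeriesAt ω P 0 := by
    refine ⟨((3/4 : ℝ≥0) : ℝ≥0∞), hrad, by exact_mod_cast (by norm_num : (0:ℝ≥0) < 3/4), ?_⟩
    intro y hy
    rw [EMetric.mem_ball, edist_zero_right] at hy
    have hy' : ‖y‖₊ < (3/4 : ℝ≥0) := by exact_mod_cast hy
    have hy1 : y ∈ ball (0:ℂ) 1 := by
      rw [mem_ball_zero_iff]
      calc (‖y‖ : ℝ) = (‖y‖₊ : ℝ) := rfl
      _ < ((3/4 : ℝ≥0) : ℝ) := by exact_mod_cast hy'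
      _ < 1 := by norm_num
    have := hωc y hy1
    simp only [zero_add]
    convert this using 2 with n
    · rfl
    rw [hPdef, FormalMultilinearSeries.ofScalars_apply_eq]
    simp [smul_eq_mul, mul_comm]
  -- first Schur function
  set φ := dslope ω 0 with hφdef
  have hφP : HasFPowerSeriesAt φ P.fslope 0 := hP.has_fpower_series_dslope_fslope
  have hφdiff : DifferentiableOn ℂ φ (ball 0 1) :=
    (differentiableOn_dslope (isOpen_ball.mem_nhds h0mem)).2 hω
  have hφle : ∀ z ∈ ball (0:ℂ) 1, ‖φ z‖ ≤ 1 := by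
    intro z hz
    have hms : Set.MapsTo ω (ball (0:ℂ) 1) (closedBall (ω 0) 1) := by
      intro w hw; rw [hω0]; exact ball_subset_closedBall (hωmap w hw)
    simpa using Complex.norm_dslope_le_div_of_mapsTo_ball hω hms hz
  have hφ0 : φ 0 = c 1 := by
    rw [hφdef, dslope_same, hP.deriv]; exact hPc 1
  have hφd : deriv φ 0 = c 2 := by
    rw [hφP.deriv]
    show P.fslope.coeff 1 = c 2
    rw [FormalMultilinearSeries.coeff_fslope]; exact hPc 2
  set φ₁ := dslope φ 0 with hφ₁def
  have hφ₁P : HasFPowerSeriesAt φ₁ P.fslope.fslope 0 := hφP.has_fpower_series_dslope_fslope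
  have hφ₁diff : DifferentiableOn ℂ φ₁ (ball 0 1) :=
    (differentiableOn_dslope (isOpen_ball.mem_nhds h0mem)).2 hφdiff
  have hφ₁0 : φ₁ 0 = c 2 := by rw [hφ₁def, dslope_same, hφd]
  have hφ₁d : deriv φ₁ 0 = c 3 := by
    rw [hφ₁P.deriv]
    show P.fslope.fslope.coeff 1 = c 3
    rw [FormalMultilinearSeries.coeff_fslope, FormalMultilinearSeries.coeff_fslope]; exact hPc 3
  have hφsub : ∀ z : ℂ, φ z - c 1 = z * φ₁ z := by
    intro z
    have h := sub_smul_dslope φ 0 z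
    rw [sub_zero, smul_eq_mul] at h
    rw [← hφ0, ← h]
  have ha1 : ‖c 1‖ ≤ 1 := hφ0 ▸ hφle 0 h0mem
  by_cases hA : ‖c 1‖ < 1
  · -- main case
    set D : ℂ → ℂ := fun z => 1 - (starRingEnd ℂ) (c 1) * φ z with hDdef
    have hDne : ∀ z ∈ ball (0:ℂ) 1, D z ≠ 0 := by
      intro z hz h0'
      have h1 : ‖(starRingEnd ℂ) (c 1) * φ z‖ < 1 := by
        rw [norm_mul, RCLike.norm_conj]
        calc ‖c 1‖ * ‖φ z‖ ≤ ‖c 1‖ * 1 :=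
          mul_le_mul_of_nonneg_left (hφle z hz) (norm_nonneg _)
        _ < 1 := by rw [mul_one]; exact hA
      have h2 : (starRingEnd ℂ) (c 1) * φ z = 1 := (sub_eq_zero.mp h0').symm
      rw [h2] at h1; simp at h1
    have hDdiff : DifferentiableOn ℂ D (ball (0:ℂ) 1) :=
      (differentiableOn_const _).sub ((differentiableOn_const _).mul hφdiff)
    set g : ℂ → ℂ := fun z => (φ z - c 1) / D z with hgdef
    have hgdiff : DifferentiableOn ℂ g (ball (0:ℂ) 1) :=
      (hφdiff.sub_const _).div hDdiff hDne
    have hg0 : g 0 = 0 := by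
      show (φ 0 - c 1) / D 0 = 0
      rw [hφ0, sub_self, zero_div]
    have hgle : ∀ z ∈ ball (0:ℂ) 1, ‖g z‖ ≤ 1 := by
      intro z hz
      show ‖(φ z - c 1) / D z‖ ≤ 1
      rw [norm_div]
      apply div_le_one_of_le₀ _ (norm_nonneg _)
      exact mobius_norm_le ha1 (hφle z hz)
    have hψle : ∀ z ∈ ball (0:ℂ) 1, ‖dslope g 0 z‖ ≤ 1 := schwarz_closed hgdiff hg0 hgle
    set ψ : ℂ → ℂ := fun z => φ₁ z / D z with hψdef
    have hψdiff : DifferentiableOn ℂ ψ (ball (0:ℂ) 1) := hφ₁diff.div hDdiff hDne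
    have hD0 : D 0 = 1 - (starRingEnd ℂ) (c 1) * c 1 := by
      show 1 - (starRingEnd ℂ) (c 1) * φ 0 = _
      rw [hφ0]
    have hane : (1 : ℂ) - (starRingEnd ℂ) (c 1) * c 1 ≠ 0 := hD0 ▸ hDne 0 h0mem
    have hφdiffAt : DifferentiableAt ℂ φ 0 := hφdiff.differentiableAt (isOpen_ball.mem_nhds h0mem)
    have hφ₁diffAt : DifferentiableAt ℂ φ₁ 0 :=
      hφ₁diff.differentiableAt (isOpen_ball.mem_nhds h0mem)
    have hDdiffAt : DifferentiableAt ℂ D 0 := hDdiff.differentiableAt (isOpen_ball.mem_nhds h0mem)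
    have hderivg : deriv g 0 = c 2 / D 0 := by
      rw [hgdef]
      rw [deriv_fun_div (hφdiffAt.sub_const _) hDdiffAt (hDne 0 h0mem)]
      rw [deriv_sub_const, hφd, hφ0, sub_self, zero_mul, sub_zero, sq]
      rw [mul_div_mul_right _ _ (hDne 0 h0mem)]
    have hψg : Set.EqOn (dslope g 0) ψ (ball (0:ℂ) 1) := by
      intro z hz
      rcases eq_or_ne z 0 with rfl | hzne
      · show dslope g 0 0 = ψ 0
        rw [dslope_same, hderivg]
        show c 2 / D 0 = φ₁ 0 / D 0
        rw [hφ₁0]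
      · rw [dslope_of_ne _ hzne, slope_def_field, hg0, sub_zero, sub_zero]
        show (φ z - c 1) / D z / z = φ₁ z / D z
        rw [hφsub z, div_div, mul_comm (D z) z, mul_div_mul_left _ _ hzne]
    have hψle' : ∀ z ∈ ball (0:ℂ) 1, ‖ψ z‖ ≤ 1 := fun z hz => hψg hz ▸ hψle z hz
    set b : ℂ := c 2 / (1 - (starRingEnd ℂ) (c 1) * c 1) with hbdef
    have hψ0 : ψ 0 = b := by
      show φ₁ 0 / D 0 = b
      rw [hφ₁0, hD0, hbdef]
    have hb1 : ‖b‖ ≤ 1 := hψ0 ▸ hψle' 0 h0mem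
    have hc2 : c 2 = (1 - (starRingEnd ℂ) (c 1) * c 1) * b := by
      rw [hbdef]; field_simp
    have hderivD : deriv D 0 = -((starRingEnd ℂ) (c 1) * c 2) := by
      rw [hDdef]
      rw [deriv_const_sub]
      rw [deriv_const_mul _ hφdiffAt, hφd]
    have hderivψ : deriv ψ 0 = (c 3 * D 0 + (starRingEnd ℂ) (c 1) * c 2 * c 2) / D 0 ^ 2 := by
      rw [hψdef, deriv_fun_div hφ₁diffAt hDdiffAt (hDne 0 h0mem), hφ₁d, hφ₁0, hderivD]
      ring_nf
    by_cases hB : ‖b‖ < 1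
    · -- second Möbius step
      set E : ℂ → ℂ := fun z => 1 - (starRingEnd ℂ) b * ψ z with hEdef
      have hEne : ∀ z ∈ ball (0:ℂ) 1, E z ≠ 0 := by
        intro z hz h0'
        have h1 : ‖(starRingEnd ℂ) b * ψ z‖ < 1 := by
          rw [norm_mul, RCLike.norm_conj]
          calc ‖b‖ * ‖ψ z‖ ≤ ‖b‖ * 1 :=
            mul_le_mul_of_nonneg_left (hψle' z hz) (norm_nonneg _)
          _ < 1 := by rw [mul_one]; exact hB
        have h2 : (starRingEnd ℂ) b * ψ z = 1 := (sub_eq_zero.mp h0').symm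
        rw [h2] at h1; simp at h1
      have hEdiff : DifferentiableOn ℂ E (ball (0:ℂ) 1) :=
        (differentiableOn_const _).sub ((differentiableOn_const _).mul hψdiff)
      set h : ℂ → ℂ := fun z => (ψ z - b) / E z with hhdef
      have hhdiff : DifferentiableOn ℂ h (ball (0:ℂ) 1) :=
        (hψdiff.sub_const _).div hEdiff hEne
      have hh0 : h 0 = 0 := by
        show (ψ 0 - b) / E 0 = 0
        rw [hψ0, sub_self, zero_div]
      have hhle : ∀ z ∈ ball (0:ℂ) 1, ‖h z‖ ≤ 1 := by
        intro z hz
        show ‖(ψ z - b) / E z‖ ≤ 1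
        rw [norm_div]
        apply div_le_one_of_le₀ _ (norm_nonneg _)
        exact mobius_norm_le hb1 (hψle' z hz)
      have hd1 : ‖deriv h 0‖ ≤ 1 := by
        have := schwarz_closed hhdiff hh0 hhle 0 h0mem
        rwa [dslope_same] at this
      have hE0 : E 0 = 1 - (starRingEnd ℂ) b * b := by
        show 1 - (starRingEnd ℂ) b * ψ 0 = _
        rw [hψ0]
      have hbne : (1 : ℂ) - (starRingEnd ℂ) b * b ≠ 0 := hE0 ▸ hEne 0 h0mem
      have hψdiffAt : DifferentiableAt ℂ ψ 0 :=
        hψdiff.differentiableAt (isOpen_ball.mem_nhds h0mem)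
      have hEdiffAt : DifferentiableAt ℂ E 0 :=
        hEdiff.differentiableAt (isOpen_ball.mem_nhds h0mem)
      have hderivh : deriv h 0 = deriv ψ 0 / E 0 := by
        rw [hhdef]
        rw [deriv_fun_div (hψdiffAt.sub_const _) hEdiffAt (hEne 0 h0mem)]
        rw [deriv_sub_const, hψ0, sub_self, zero_mul, sub_zero, sq]
        rw [mul_div_mul_right _ _ (hEne 0 h0mem)]
      refine ⟨c 1, b, deriv h 0, ha1, hb1, hd1, rfl, hc2, ?_⟩
      -- c 3 relation
      have hψ0' : deriv ψ 0 = (1 - (starRingEnd ℂ) b * b) * deriv h 0 := by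
        rw [hderivh, hE0]
        field_simp
      have hD0ne : D 0 ≠ 0 := hDne 0 h0mem
      have key : deriv ψ 0 * D 0 ^ 2 = c 3 * D 0 + (starRingEnd ℂ) (c 1) * c 2 * c 2 := by
        rw [hderivψ, div_mul_cancel₀ _ (pow_ne_zero 2 (hDne 0 h0mem))]
      rw [hψ0', hc2, hD0] at key
      apply mul_left_cancel₀ hane
      linear_combination -key
    · -- ψ is constant
      have hB1 : ‖b‖ = 1 := le_antisymm hb1 (not_lt.1 hB)
      have hmax : IsMaxOn (norm ∘ ψ) (ball (0:ℂ) 1) 0 := by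
        intro z hz
        simp only [Function.comp_apply, Set.mem_setOf_eq]
        rw [hψ0]
        calc ‖ψ z‖ ≤ 1 := hψle' z hz
        _ = ‖b‖ := hB1.symm
      have hconst : Set.EqOn ψ (Function.const ℂ (ψ 0)) (ball (0:ℂ) 1) :=
        Complex.eqOn_of_isPreconnected_of_isMaxOn_norm (convex_ball _ _).isPreconnected
          isOpen_ball hψdiff h0mem hmax
      have hev : ψ =ᶠ[nhds (0:ℂ)] Function.const ℂ (ψ 0) :=
        hconst.eventuallyEq_of_mem (isOpen_ball.mem_nhds h0mem)
      have hdψ : deriv ψ 0 = 0 := by rw [hev.deriv_eq]; exact deriv_const _ _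
      refine ⟨c 1, b, 0, ha1, hb1, by norm_num, rfl, hc2, ?_⟩
      have hD0ne : D 0 ≠ 0 := hDne 0 h0mem
      have key : (0:ℂ) = c 3 * D 0 + (starRingEnd ℂ) (c 1) * c 2 * c 2 := by
        have := hderivψ
        rw [hdψ] at this
        have h2 := (div_eq_zero_iff.mp this.symm).resolve_right (pow_ne_zero 2 hD0ne)
        exact h2.symm
      rw [hc2, hD0] at key
      apply mul_left_cancel₀ hane
      linear_combination -key
  · -- φ is constant
    have hA1 : ‖c 1‖ = 1 := le_antisymm ha1 (not_lt.1 hA)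
    have hmax : IsMaxOn (norm ∘ φ) (ball (0:ℂ) 1) 0 := by
      intro z hz
      simp only [Function.comp_apply, Set.mem_setOf_eq]
      rw [hφ0]
      calc ‖φ z‖ ≤ 1 := hφle z hz
      _ = ‖c 1‖ := hA1.symm
    have hconst : Set.EqOn φ (Function.const ℂ (φ 0)) (ball (0:ℂ) 1) :=
      Complex.eqOn_of_isPreconnected_of_isMaxOn_norm (convex_ball _ _).isPreconnected
        isOpen_ball hφdiff h0mem hmax
    have hev : φ =ᶠ[nhds (0:ℂ)] Function.const ℂ (φ 0) :=
      hconst.eventuallyEq_of_mem (isOpen_ball.mem_nhds h0mem)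
    have hc2 : c 2 = 0 := by
      rw [← hφd, hev.deriv_eq]; exact deriv_const _ _
    have hφ₁z : Set.EqOn φ₁ (fun _ => (0:ℂ)) (ball (0:ℂ) 1) := by
      intro z hz
      rcases eq_or_ne z 0 with rfl | hzne
      · show φ₁ 0 = 0
        rw [hφ₁0, hc2]
      · show φ₁ z = 0
        rw [hφ₁def, dslope_of_ne _ hzne, slope_def_field]
        rw [hconst hz, Function.const_apply, sub_self, zero_div]
    have hc3 : c 3 = 0 := by
      rw [← hφ₁d, (hφ₁z.eventuallyEq_of_mem (isOpen_ball.mem_nhds h0mem)).deriv_eq]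
      exact deriv_const _ _
    exact ⟨c 1, 0, 0, ha1, by norm_num, by norm_num, rfl, by rw [hc2]; ring,
      by rw [hc3]; ring⟩


lemma key_ineq {x y : ℝ} (hx0 : 0 ≤ x) (hx1 : x ≤ 1) (hy0 : 0 ≤ y) (hy1 : y ≤ 1) :
    (1-x^2)*(1-y^2) + (1-x^2)*x*y^2 + (1/2)*x*(1-x^2)*y + x^3 ≤ 1 := by
  nlinarith [mul_nonneg (mul_nonneg (sub_nonneg.2 hx1) hy0) (sub_nonneg.2 hy1),
    sq_nonneg (4*(1-x)*y - x), mul_nonneg hx0 hy0, sq_nonneg (x - y),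
    mul_nonneg (mul_nonneg hx0 hx0) hx0, sq_nonneg (1-x), sq_nonneg y,
    mul_nonneg (mul_nonneg (sub_nonneg.2 hx1) (sub_nonneg.2 hx1)) (sq_nonneg (4*y*(1+x) - x)),
    mul_nonneg (mul_nonneg hx0 (sub_nonneg.2 hx1)) (mul_nonneg hy0 (sub_nonneg.2 hy1))]

lemma final_bound (a b d : ℂ) (μ ν : ℝ) (ha : ‖a‖ ≤ 1) (hb : ‖b‖ ≤ 1) (hd : ‖d‖ ≤ 1)
    (hμ : |μ| ≤ 1/2) (hν : |ν| ≤ 1) :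
    ‖(1 - (starRingEnd ℂ) a * a) * ((1 - (starRingEnd ℂ) b * b) * d - (starRingEnd ℂ) a * b^2)
      + (μ:ℂ) * a * ((1 - (starRingEnd ℂ) a * a) * b) + (ν:ℂ) * a^3‖ ≤ 1 := by
  set x := ‖a‖ with hx
  set y := ‖b‖ with hy
  have hx0 : 0 ≤ x := norm_nonneg a
  have hy0 : 0 ≤ y := norm_nonneg b
  have hd0 : 0 ≤ ‖d‖ := norm_nonneg d
  have hca : (1:ℂ) - (starRingEnd ℂ) a * a = ((1 - x^2 : ℝ) : ℂ) := by
    rw [mul_comm, Complex.mul_conj, Complex.normSq_eq_norm_sq]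
    push_cast
    rw [hx]
  have hcb : (1:ℂ) - (starRingEnd ℂ) b * b = ((1 - y^2 : ℝ) : ℂ) := by
    rw [mul_comm, Complex.mul_conj, Complex.normSq_eq_norm_sq]
    push_cast
    rw [hy]
  have hxs : 0 ≤ 1 - x^2 := by nlinarith
  have hys : 0 ≤ 1 - y^2 := by nlinarith
  have hX : ‖(1 - (starRingEnd ℂ) a * a) * ((1 - (starRingEnd ℂ) b * b) * d - (starRingEnd ℂ) a * b^2)‖
      ≤ (1-x^2) * ((1-y^2) * ‖d‖ + x * y^2) := by
    rw [hca, hcb, norm_mul, Complex.norm_real, Real.norm_eq_abs, _root_.abs_of_nonneg hxs]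
    apply mul_le_mul_of_nonneg_left _ hxs
    calc ‖((1 - y^2 : ℝ) : ℂ) * d - (starRingEnd ℂ) a * b^2‖
        ≤ ‖((1 - y^2 : ℝ) : ℂ) * d‖ + ‖(starRingEnd ℂ) a * b^2‖ := norm_sub_le _ _
      _ = (1-y^2) * ‖d‖ + x * y^2 := by
          rw [norm_mul, norm_mul, Complex.norm_real, Real.norm_eq_abs,
            _root_.abs_of_nonneg hys, RCLike.norm_conj, norm_pow]
  have hY : ‖(μ:ℂ) * a * ((1 - (starRingEnd ℂ) a * a) * b)‖ = |μ| * x * ((1-x^2) * y) := by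
    rw [hca, norm_mul, norm_mul, norm_mul, Complex.norm_real, Complex.norm_real,
      Real.norm_eq_abs, Real.norm_eq_abs, _root_.abs_of_nonneg hxs]
  have hZ : ‖(ν:ℂ) * a^3‖ = |ν| * x^3 := by
    rw [norm_mul, norm_pow, Complex.norm_real, Real.norm_eq_abs]
  have htri := norm_add₃_le (E := ℂ)
    (a := (1 - (starRingEnd ℂ) a * a) * ((1 - (starRingEnd ℂ) b * b) * d - (starRingEnd ℂ) a * b^2))
    (b := (μ:ℂ) * a * ((1 - (starRingEnd ℂ) a * a) * b)) (c := (ν:ℂ) * a^3)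
  have hk := key_ineq hx0 ha hy0 hb
  have hp1 : 0 ≤ (1-x^2)*(1-y^2)*(1-‖d‖) :=
    mul_nonneg (mul_nonneg hxs hys) (sub_nonneg.2 hd)
  have hp2 : 0 ≤ (1/2 - |μ|) * (x*((1-x^2)*y)) :=
    mul_nonneg (by linarith) (mul_nonneg hx0 (mul_nonneg hxs hy0))
  have hp3 : 0 ≤ (1-|ν|)*x^3 :=
    mul_nonneg (by linarith) (pow_nonneg hx0 3)
  nlinarith [htri, hX, hY, hZ, hk, hp1, hp2, hp3, abs_nonneg μ, abs_nonneg ν]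

/-- Prokhorov–Szynal lemma, region `D₁`: for a Schwarz function with
coefficients `c` and real `μ`, `ν` with `|μ| ≤ 1/2` and `-1 ≤ ν ≤ 1`,
`|c₃ + μ c₁ c₂ + ν c₁³| ≤ 1`. -/
theorem prokhorov_szynal_D1
    (ω : ℂ → ℂ) (c : ℕ → ℂ)
    (hω : DifferentiableOn ℂ ω (ball (0 : ℂ) 1))
    (hωc : ∀ z ∈ ball (0 : ℂ) 1, HasSum (fun n => c n * z ^ n) (ω z))
    (hc0 : c 0 = 0)
    (hωmap : ∀ z ∈ ball (0 : ℂ) 1, ω z ∈ ball (0 : ℂ) 1)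
    (μ ν : ℝ) (hμ : |μ| ≤ 1 / 2) (hν₁ : -1 ≤ ν) (hν₂ : ν ≤ 1) :
    ‖c 3 + (μ : ℂ) * c 1 * c 2 + (ν : ℂ) * c 1 ^ 3‖ ≤ 1 := by
  obtain ⟨a, b, d, ha, hb, hd, h1, h2, h3⟩ := schur_param ω c hω hωc hc0 hωmap
  rw [h1, h2, h3]
  exact final_bound a b d μ ν ha hb hd hμ (abs_le.mpr ⟨hν₁, hν₂⟩)
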